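/- Let f be an SC decoder built from arbitrary functions f_i : 𝒳^{i−1} × 𝒴^n → 𝒳 for i ∈ I0, let ψ(c,y) ≡ T^{−1}(f(c,y)), and let ε ≡ Prob(ψ(AX,Y) ≠ X). If ε ≤ 1/2, then Σ_{i∈I0} H(C_i | C_1^{i−1}, Y) ≤ n·(ε + h(ε)), where H denotes conditional Shannon entropy with logarithm base |𝒳| and h(θ) ≡ −θ log_{|𝒳|} θ − (1−θ) log_{|𝒳|}(1−θ) is the binary entropy function (with h(0) = 0). -/

import Mathlib

open Finset

noncomputable def probOf {Ω : Type*} [Fintype Ω] (p : Ω → ℝ) (E : Set Ω) : ℝ :=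
  ∑ ω, E.indicator p ω

noncomputable def condProb {Ω : Type*} [Fintype Ω] (p : Ω → ℝ) (E F : Set Ω) : ℝ :=
  probOf p (E ∩ F) / probOf p F

noncomputable def entropyOf {Ω Z : Type*} [Fintype Ω] [Fintype Z] (p : Ω → ℝ) (V : Ω → Z) : ℝ :=
  ∑ z, Real.negMulLog (probOf p {ω | V ω = z})

noncomputable def condEntropyOf {Ω U V : Type*} [Fintype Ω] [Fintype U] [Fintype V]
    (p : Ω → ℝ) (Uv : Ω → U) (Vv : Ω → V) : ℝ :=
  entropyOf p (fun ω => (Uv ω, Vv ω)) - entropyOf p Vv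

def prefixVec {𝒳 : Type*} {n : ℕ} (c : Fin n → 𝒳) (m : ℕ) (h : m ≤ n) : Fin m → 𝒳 :=
  fun k => c ⟨k.1, lt_of_lt_of_le k.2 h⟩

def scVecGo {𝒳 : Type*} {n : ℕ} (g : (i : Fin n) → (Fin i.1 → 𝒳) → 𝒳) :
    (k : ℕ) → k < n → 𝒳
  | k, hk => g ⟨k, hk⟩ (fun j => scVecGo g j.1 (j.2.trans hk))
termination_by k _ => k
decreasing_by exact j.2

def scVec {𝒳 : Type*} {n : ℕ} (g : (i : Fin n) → (Fin i.1 → 𝒳) → 𝒳) : Fin n → 𝒳 :=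
  fun i => scVecGo g i.1 i.2

def scDec {𝒳 𝒴 : Type*} {n l : ℕ}
    (I1 : Finset (Fin n)) (hc1 : I1.card = l)
    (f : (i : Fin n) → (Fin i.1 → 𝒳) → (Fin n → 𝒴) → 𝒳)
    (c : Fin l → 𝒳) (y : Fin n → 𝒴) : Fin n → 𝒳 :=
  scVec (fun i pref => if h : i ∈ I1 then c ((I1.orderIsoOfFin hc1).symm ⟨i, h⟩) else f i pref y)

def scDecOrd {𝒳 𝒴 : Type*} {n l : ℕ}
    (f : (i : Fin n) → (Fin i.1 → 𝒳) → (Fin n → 𝒴) → 𝒳)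
    (c : Fin l → 𝒳) (y : Fin n → 𝒴) : Fin n → 𝒳 :=
  scVec (fun i pref => if h : i.1 < l then c ⟨i.1, h⟩ else f i pref y)


lemma scVec_apply {𝒳 : Type*} {n : ℕ} (g : (i : Fin n) → (Fin i.1 → 𝒳) → 𝒳) (i : Fin n) :
    scVec g i = g i (prefixVec (scVec g) i.1 i.2.le) := by
  rw [scVec, scVecGo]
  rfl

open Classical in
lemma probOf_eq_sum {Ω : Type*} [Fintype Ω] (p : Ω → ℝ) (E : Set Ω) :
    probOf p E = ∑ ω, if ω ∈ E then p ω else 0 :=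
  Finset.sum_congr rfl fun ω _ => Set.indicator_apply E p ω

lemma probOf_zero_of {Ω : Type*} [Fintype Ω] {p : Ω → ℝ} (hp : ∀ ω, 0 ≤ p ω) {E : Set Ω}
    (h : probOf p E = 0) : ∀ ω ∈ E, p ω = 0 := by
  intro ω hω
  rw [← Set.indicator_of_mem hω p]
  exact (Finset.sum_eq_zero_iff_of_nonneg
    (fun ω _ => Set.indicator_apply_nonneg (fun _ => hp ω))).mp h ω (Finset.mem_univ ω)

lemma probOf_nonneg {Ω : Type*} [Fintype Ω] {p : Ω → ℝ} (hp : ∀ ω, 0 ≤ p ω) (E : Set Ω) :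
    0 ≤ probOf p E := by
  classical
  rw [probOf_eq_sum]
  refine Finset.sum_nonneg fun ω _ => ?_
  split <;> simp [hp ω]

lemma probOf_mono {Ω : Type*} [Fintype Ω] {p : Ω → ℝ} (hp : ∀ ω, 0 ≤ p ω) {E F : Set Ω}
    (h : E ⊆ F) : probOf p E ≤ probOf p F := by
  classical
  rw [probOf_eq_sum, probOf_eq_sum]
  refine Finset.sum_le_sum fun ω _ => ?_
  by_cases hE : ω ∈ E
  · simp [hE, h hE]
  · simp only [hE, if_false]
    split <;> simp [hp ω]

open Classical in
lemma fano {Ω W 𝒳 : Type*} [Fintype Ω] [Fintype W] [Fintype 𝒳]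
    (hK : 2 ≤ Fintype.card 𝒳)
    (p : Ω → ℝ) (hp0 : ∀ ω, 0 ≤ p ω) (hp1 : ∑ ω, p ω = 1)
    (U : Ω → 𝒳) (V : Ω → W) (g : W → 𝒳)
    (ε : ℝ) (hδε : probOf p {ω | g (V ω) ≠ U ω} ≤ ε) (hε2 : ε ≤ 1/2) :
    condEntropyOf p U V ≤
      Real.negMulLog ε + Real.negMulLog (1 - ε) + ε * Real.log (Fintype.card 𝒳) := by
  set δ : ℝ := probOf p {ω | g (V ω) ≠ U ω} with hδdef
  have hδ0 : 0 ≤ δ := probOf_nonneg hp0 _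
  set P : 𝒳 × W → ℝ := fun z => probOf p {ω | (U ω, V ω) = z} with hPdef
  set Q : W → ℝ := fun v => probOf p {ω | V ω = v} with hQdef
  have hP0 : ∀ z, 0 ≤ P z := fun z => probOf_nonneg hp0 _
  have hQ0 : ∀ v, 0 ≤ Q v := fun v => probOf_nonneg hp0 _
  -- marginal
  have hPsum : ∀ v, ∑ u, P (u, v) = Q v := by
    intro v
    simp only [hPdef, hQdef, probOf_eq_sum, Set.mem_setOf_eq]
    rw [Finset.sum_comm]
    refine Finset.sum_congr rfl fun ω _ => ?_
    by_cases h : V ω = v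
    · simp [Prod.ext_iff, h, Finset.sum_ite_eq]
    · simp [Prod.ext_iff, h]
  have hQsum : ∑ v, Q v = 1 := by
    simp only [hQdef, probOf_eq_sum, Set.mem_setOf_eq]
    rw [Finset.sum_comm]
    rw [← hp1]
    refine Finset.sum_congr rfl fun ω _ => ?_
    simp [Finset.sum_ite_eq]
  have hPtot : ∑ z, P z = 1 := by
    rw [Fintype.sum_prod_type, Finset.sum_comm]
    simp only [hPsum]
    exact hQsum
  have hPQ : ∀ u v, P (u, v) ≤ Q v := by
    intro u v
    rw [← hPsum v]
    exact Finset.single_le_sum (fun u _ => hP0 (u, v)) (Finset.mem_univ u)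
  -- split of δ
  have hsplit2 : ∑ z : 𝒳 × W, (if z.1 = g z.2 then 0 else P z) = δ := by
    have step : ∀ z : 𝒳 × W, (if z.1 = g z.2 then 0 else P z)
        = ∑ ω, (if (U ω, V ω) = z then (if z.1 = g z.2 then 0 else p ω) else 0) := by
      intro z
      by_cases h1 : z.1 = g z.2
      · simp [h1]
      · simp only [h1, if_neg, hPdef, probOf_eq_sum, Set.mem_setOf_eq, if_false]
    rw [Finset.sum_congr rfl fun z _ => step z, Finset.sum_comm, hδdef, probOf_eq_sum]
    refine Finset.sum_congr rfl fun ω _ => ?_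
    rw [Finset.sum_ite_eq]
    by_cases h : U ω = g (V ω) <;> simp [Set.mem_setOf_eq, h, Ne, eq_comm (a := g (V ω))]
  have hsplit1 : ∑ z : 𝒳 × W, (if z.1 = g z.2 then P z else 0) = 1 - δ := by
    have key : ∀ z : 𝒳 × W, (if z.1 = g z.2 then P z else 0)
        = P z - (if z.1 = g z.2 then 0 else P z) := by
      intro z; by_cases h : z.1 = g z.2 <;> simp [h]
    rw [Finset.sum_congr rfl fun z _ => key z, Finset.sum_sub_distrib, hPtot, hsplit2]
  rcases eq_or_lt_of_le (hδ0.trans hδε) with hε0 | hεpos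
  · -- ε = 0 case
    have hδz : δ = 0 := le_antisymm (hδε.trans hε0.ge) hδ0
    have hvanish : ∀ ω, g (V ω) ≠ U ω → p ω = 0 := fun ω hne =>
      probOf_zero_of hp0 (hδdef ▸ hδz) ω hne
    have hPz : ∀ u v, u ≠ g v → P (u, v) = 0 := by
      intro u v hne
      rw [hPdef]
      simp only [probOf_eq_sum, Set.mem_setOf_eq]
      refine Finset.sum_eq_zero fun ω _ => ?_
      split
      · rename_i h
        obtain ⟨h1, h2⟩ := Prod.mk.injEq .. ▸ h
        exact hvanish ω (by rw [h2, h1]; exact fun hc => hne hc.symm)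
      · rfl
    have hPg : ∀ v, P (g v, v) = Q v := by
      intro v
      rw [← hPsum v]
      exact (Finset.sum_eq_single (g v) (fun u _ hu => hPz u v hu) (by simp)).symm
    have hent : entropyOf p (fun ω => (U ω, V ω)) = entropyOf p V := by
      rw [entropyOf, entropyOf, Fintype.sum_prod_type, Finset.sum_comm]
      refine Finset.sum_congr rfl fun v _ => ?_
      rw [Finset.sum_eq_single (g v) (fun u _ hu => by
        rw [show probOf p {ω | (U ω, V ω) = (u, v)} = P (u,v) from rfl, hPz u v hu,
          Real.negMulLog_zero]) (by simp)]
      rw [show probOf p {ω | (U ω, V ω) = (g v, v)} = P (g v, v) from rfl, hPg v]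
    rw [condEntropyOf, hent, sub_self, ← hε0]
    simp [Real.negMulLog_zero, Real.negMulLog_one]
  · -- ε > 0 case
    have hε1 : ε < 1 := lt_of_le_of_lt hε2 (by norm_num)
    have h1ε : (0:ℝ) < 1 - ε := by linarith
    set K : ℝ := (Fintype.card 𝒳 : ℝ) with hKdef
    have hK2 : (2:ℝ) ≤ K := by rw [hKdef]; exact_mod_cast hK
    have hK1 : (1:ℝ) ≤ K - 1 := by linarith
    have hK1pos : (0:ℝ) < K - 1 := by linarith
    set ε' : ℝ := ε / (K - 1) with hε'def
    have hε'pos : 0 < ε' := div_pos hεpos hK1pos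
    set s : 𝒳 × W → ℝ := fun z => if z.1 = g z.2 then 1 - ε else ε' with hsdef
    have hs0 : ∀ z, 0 < s z := fun z => by
      rw [hsdef]; dsimp only; split
      · exact h1ε
      · exact hε'pos
    have hjoint : entropyOf p (fun ω => (U ω, V ω)) = ∑ z : 𝒳 × W, Real.negMulLog (P z) := rfl
    have hmarg : entropyOf p V = ∑ v, Real.negMulLog (Q v) := rfl
    have h2 : ∑ z : 𝒳 × W, P z * Real.log (Q z.2) = ∑ v, Q v * Real.log (Q v) := by
      rw [Fintype.sum_prod_type, Finset.sum_comm]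
      refine Finset.sum_congr rfl fun v _ => ?_
      dsimp only
      rw [← Finset.sum_mul, hPsum]
    have hA : condEntropyOf p U V
        = ∑ z : 𝒳 × W, (Real.negMulLog (P z) + P z * Real.log (Q z.2)) := by
      rw [condEntropyOf, hjoint, hmarg, Finset.sum_add_distrib, h2]
      have hneg : ∑ v, Real.negMulLog (Q v) = - ∑ v, Q v * Real.log (Q v) := by
        rw [← Finset.sum_neg_distrib]
        refine Finset.sum_congr rfl fun v _ => ?_
        rw [Real.negMulLog]; ring
      rw [hneg]; ring
    have hB : ∀ z : 𝒳 × W, Real.negMulLog (P z) + P z * Real.log (Q z.2)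
        ≤ Q z.2 * s z - P z - P z * Real.log (s z) := by
      intro z
      rcases eq_or_lt_of_le (hP0 z) with hz | hz
      · rw [← hz, Real.negMulLog_zero]
        simp only [zero_mul, add_zero, sub_zero, zero_add]
        have := mul_nonneg (hQ0 z.2) (hs0 z).le
        linarith
      · have hQpos : 0 < Q z.2 := lt_of_lt_of_le hz (by
          rcases z with ⟨u, v⟩; exact hPQ u v)
        have hx : 0 < Q z.2 * s z / P z := by positivity
        have hlog := Real.log_le_sub_one_of_pos hx
        have hmul := mul_le_mul_of_nonneg_left hlog hz.le
        have hcancel : P z * (Q z.2 * s z / P z) = Q z.2 * s z := by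
          field_simp
        have hlogeq : Real.log (Q z.2 * s z / P z)
            = Real.log (Q z.2) + Real.log (s z) - Real.log (P z) := by
          rw [Real.log_div (by positivity) hz.ne', Real.log_mul hQpos.ne' (hs0 z).ne']
        rw [hlogeq] at hmul
        rw [Real.negMulLog]
        nlinarith [hmul, hcancel]
    have hS1 : ∑ z : 𝒳 × W, (if z.1 = g z.2 then Q z.2 else 0) = 1 := by
      rw [Fintype.sum_prod_type, Finset.sum_comm]
      refine (Finset.sum_congr rfl fun v _ => ?_).trans hQsum
      dsimp only
      rw [Finset.sum_ite_eq']
      simp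
    have hS2 : ∑ z : 𝒳 × W, (if z.1 = g z.2 then 0 else Q z.2) = K - 1 := by
      have hterm : ∀ z : 𝒳 × W, (if z.1 = g z.2 then 0 else Q z.2)
          = Q z.2 - (if z.1 = g z.2 then Q z.2 else 0) := fun z => by
        by_cases h : z.1 = g z.2 <;> simp [h]
      rw [Finset.sum_congr rfl fun z _ => hterm z, Finset.sum_sub_distrib, hS1]
      have hQQ : ∑ z : 𝒳 × W, Q z.2 = K := by
        rw [Fintype.sum_prod_type]
        dsimp only
        simp only [hQsum]
        rw [Finset.sum_const, Finset.card_univ, nsmul_eq_mul, mul_one, hKdef]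
      rw [hQQ]
    have hQs : ∑ z : 𝒳 × W, Q z.2 * s z = 1 := by
      have hterm : ∀ z : 𝒳 × W, Q z.2 * s z
          = (1 - ε) * (if z.1 = g z.2 then Q z.2 else 0)
            + ε' * (if z.1 = g z.2 then 0 else Q z.2) := by
        intro z; rw [hsdef]; dsimp only
        by_cases h : z.1 = g z.2 <;> simp [h] <;> ring
      rw [Finset.sum_congr rfl fun z _ => hterm z, Finset.sum_add_distrib,
        ← Finset.mul_sum, ← Finset.mul_sum, hS1, hS2, mul_one, hε'def,
        div_mul_cancel₀ _ hK1pos.ne']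
      ring
    have hPlogs : ∑ z : 𝒳 × W, P z * Real.log (s z)
        = Real.log (1 - ε) * (1 - δ) + Real.log ε' * δ := by
      have hterm : ∀ z : 𝒳 × W, P z * Real.log (s z)
          = Real.log (1 - ε) * (if z.1 = g z.2 then P z else 0)
            + Real.log ε' * (if z.1 = g z.2 then 0 else P z) := by
        intro z; rw [hsdef]; dsimp only
        by_cases h : z.1 = g z.2 <;> simp [h] <;> ring
      rw [Finset.sum_congr rfl fun z _ => hterm z, Finset.sum_add_distrib,
        ← Finset.mul_sum, ← Finset.mul_sum, hsplit1, hsplit2]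
    have hC : condEntropyOf p U V
        ≤ -(1 - δ) * Real.log (1 - ε) - δ * Real.log ε' := by
      rw [hA]
      calc ∑ z : 𝒳 × W, (Real.negMulLog (P z) + P z * Real.log (Q z.2))
          ≤ ∑ z : 𝒳 × W, (Q z.2 * s z - P z - P z * Real.log (s z)) :=
            Finset.sum_le_sum fun z _ => hB z
        _ = -(1 - δ) * Real.log (1 - ε) - δ * Real.log ε' := by
            rw [Finset.sum_sub_distrib, Finset.sum_sub_distrib, hQs, hPtot, hPlogs]
            ring
    refine hC.trans ?_
    have hεlog : Real.log ε' = Real.log ε - Real.log (K - 1) := by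
      rw [hε'def, Real.log_div hεpos.ne' hK1pos.ne']
    have f3 : Real.log ε ≤ Real.log (1 - ε) := Real.log_le_log hεpos (by linarith)
    have f4 : (0:ℝ) ≤ Real.log (K - 1) := Real.log_nonneg hK1
    have f5 : Real.log (K - 1) ≤ Real.log K := Real.log_le_log hK1pos (by linarith)
    rw [hεlog]
    simp only [Real.negMulLog]
    have h1 : 0 ≤ (ε - δ) * (Real.log (1 - ε) - Real.log ε) :=
      mul_nonneg (sub_nonneg.2 hδε) (sub_nonneg.2 f3)
    have h1' : δ * Real.log (1 - ε) - δ * Real.log ε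
        ≤ ε * Real.log (1 - ε) - ε * Real.log ε := by linear_combination h1
    have h2 : δ * Real.log (K - 1) ≤ ε * Real.log (K - 1) :=
      mul_le_mul_of_nonneg_right hδε f4
    have h3 : ε * Real.log (K - 1) ≤ ε * Real.log K :=
      mul_le_mul_of_nonneg_left f5 hεpos.le
    linarith [h1', h2, h3]

/-- for an SC decoder built from arbitrary `f_i` (`i ∈ I0`), with
`ε = Prob(T⁻¹(f(AX,Y)) ≠ X) ≤ 1/2`, one has
`Σ_{i ∈ I0} H(C_i|C_1^{i-1},Y) ≤ n (ε + h(ε))`, entropies in base `|𝒳|`. -/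
theorem stmt9
    {𝒳 𝒴 : Type*} [Fintype 𝒳] [Fintype 𝒴]
    (hcard : 2 ≤ Fintype.card 𝒳)
    (n l : ℕ) (hl : l ≤ n)
    (μ : ((Fin n → 𝒳) × (Fin n → 𝒴)) → ℝ)
    (hμ0 : ∀ ω, 0 ≤ μ ω) (hμ1 : ∑ ω, μ ω = 1)
    (A : (Fin n → 𝒳) → (Fin l → 𝒳)) (B : (Fin n → 𝒳) → (Fin (n - l) → 𝒳))
    (I1 I0 : Finset (Fin n))
    (hdisj : Disjoint I1 I0) (huniv : I1 ∪ I0 = Finset.univ)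
    (hc1 : I1.card = l) (hc0 : I0.card = n - l)
    (T : (Fin n → 𝒳) ≃ (Fin n → 𝒳))
    (hT1 : ∀ x (j : Fin l), T x (I1.orderIsoOfFin hc1 j).1 = A x j)
    (hT0 : ∀ x (j : Fin (n - l)), T x (I0.orderIsoOfFin hc0 j).1 = B x j)
    (f : (i : Fin n) → (Fin i.1 → 𝒳) → (Fin n → 𝒴) → 𝒳)
    (ε : ℝ)
    (hε : ε = probOf μ {ω | T.symm (scDec I1 hc1 f (A ω.1) ω.2) ≠ ω.1})
    (hhalf : ε ≤ 1 / 2) :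
    ∑ i ∈ I0,
        condEntropyOf μ (fun ω => T ω.1 i)
          (fun ω => (prefixVec (T ω.1) i.1 i.2.le, ω.2)) /
            Real.log (Fintype.card 𝒳) ≤
      (n : ℝ) * (ε +
        (Real.negMulLog ε + Real.negMulLog (1 - ε)) / Real.log (Fintype.card 𝒳)) := by
  have hlogK : 0 < Real.log (Fintype.card 𝒳) :=
    Real.log_pos (by exact_mod_cast lt_of_lt_of_le one_lt_two hcard)
  have hε0 : 0 ≤ ε := hε ▸ probOf_nonneg hμ0 _
  have hnm1 : 0 ≤ Real.negMulLog ε := Real.negMulLog_nonneg hε0 (by linarith)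
  have hnm2 : 0 ≤ Real.negMulLog (1 - ε) := Real.negMulLog_nonneg (by linarith) (by linarith)
  set M : ℝ := ε + (Real.negMulLog ε + Real.negMulLog (1 - ε)) / Real.log (Fintype.card 𝒳)
    with hM
  have hM0 : 0 ≤ M := by
    rw [hM]
    have := div_nonneg (add_nonneg hnm1 hnm2) hlogK.le
    linarith
  have key : ∀ i ∈ I0,
      condEntropyOf μ (fun ω => T ω.1 i)
        (fun ω => (prefixVec (T ω.1) i.1 i.2.le, ω.2)) / Real.log (Fintype.card 𝒳) ≤ M := by
    intro i hi
    have hi1 : i ∉ I1 := Finset.disjoint_right.mp hdisj hi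
    have hsub : {ω : (Fin n → 𝒳) × (Fin n → 𝒴) |
          f i (prefixVec (T ω.1) i.1 i.2.le) ω.2 ≠ T ω.1 i}
        ⊆ {ω | T.symm (scDec I1 hc1 f (A ω.1) ω.2) ≠ ω.1} := by
      intro ω hω
      simp only [Set.mem_setOf_eq] at hω ⊢
      intro heq
      apply hω
      have hc : scDec I1 hc1 f (A ω.1) ω.2 = T ω.1 := by
        conv_rhs => rw [← heq, Equiv.apply_symm_apply]
      calc f i (prefixVec (T ω.1) i.1 i.2.le) ω.2
          = f i (prefixVec (scDec I1 hc1 f (A ω.1) ω.2) i.1 i.2.le) ω.2 := by rw [hc]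
        _ = scDec I1 hc1 f (A ω.1) ω.2 i := by
            rw [scDec, scVec_apply]
            rw [dif_neg hi1]
        _ = T ω.1 i := by rw [hc]
    have hδi : probOf μ {ω : (Fin n → 𝒳) × (Fin n → 𝒴) |
        f i (prefixVec (T ω.1) i.1 i.2.le) ω.2 ≠ T ω.1 i} ≤ ε := by
      rw [hε]; exact probOf_mono hμ0 hsub
    have hfano := fano hcard μ hμ0 hμ1 (fun ω => T ω.1 i)
      (fun ω => (prefixVec (T ω.1) i.1 i.2.le, ω.2))
      (fun w => f i w.1 w.2) ε hδi hhalf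
    calc condEntropyOf μ (fun ω => T ω.1 i)
          (fun ω => (prefixVec (T ω.1) i.1 i.2.le, ω.2)) / Real.log (Fintype.card 𝒳)
        ≤ (Real.negMulLog ε + Real.negMulLog (1 - ε) + ε * Real.log (Fintype.card 𝒳)) /
            Real.log (Fintype.card 𝒳) := by gcongr
      _ = M := by
          rw [hM]
          field_simp
          ring
  calc ∑ i ∈ I0,
        condEntropyOf μ (fun ω => T ω.1 i)
          (fun ω => (prefixVec (T ω.1) i.1 i.2.le, ω.2)) / Real.log (Fintype.card 𝒳)
      ≤ ∑ _i ∈ I0, M := Finset.sum_le_sum key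
    _ = (I0.card : ℝ) * M := by rw [Finset.sum_const, nsmul_eq_mul]
    _ ≤ (n : ℝ) * M := by
        apply mul_le_mul_of_nonneg_right _ hM0
        have : I0.card ≤ n := by rw [hc0]; omega
        exact_mod_cast this
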